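/- For every j ≥ 1 and all η_1, …, η_j ∈ ℂ^V, the forward Born operator satisfies ‖K_j(η_1, …, η_j)‖_{ℓ^p(R×S)} ≤ ν_p · μ_p^{j−1} · ‖η_1‖_{ℓ^p} ⋯ ‖η_j‖_{ℓ^p}. -/

import Mathlib

open scoped ENNReal

/-- The ℓ^p norm of a finitely indexed family, `p ∈ [1, ∞]`. -/
noncomputable def lpNorm (p : ℝ≥0∞) {ι E : Type*} [Fintype ι] [SeminormedAddCommGroup E]
    (f : ι → E) : ℝ :=
  if p = ∞ then ⨆ i, ‖f i‖ else (∑ i, ‖f i‖ ^ p.toReal) ^ (1 / p.toReal)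

section aux
variable {ι E F : Type*} [Fintype ι] [SeminormedAddCommGroup E] [SeminormedAddCommGroup F]

lemma lpNorm_top (f : ι → E) : lpNorm ∞ f = ⨆ i, ‖f i‖ := if_pos rfl

lemma lpNorm_ne_top {p : ℝ≥0∞} (h : p ≠ ∞) (f : ι → E) :
    lpNorm p f = (∑ i, ‖f i‖ ^ p.toReal) ^ (1 / p.toReal) := if_neg h

lemma lpNorm_nonneg (p : ℝ≥0∞) (f : ι → E) : 0 ≤ lpNorm p f := by
  unfold lpNorm
  split
  · exact Real.iSup_nonneg fun i => norm_nonneg _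
  · exact Real.rpow_nonneg
      (Finset.sum_nonneg fun i _ => Real.rpow_nonneg (norm_nonneg _) _) _

lemma toReal_pos_of_one_le {p : ℝ≥0∞} (hp : 1 ≤ p) (h : p ≠ ∞) : 0 < p.toReal :=
  ENNReal.toReal_pos (by intro h0; simp [h0] at hp) h

lemma norm_le_lpNorm [Nonempty ι] {p : ℝ≥0∞} (hp : 1 ≤ p) (f : ι → E) (i : ι) :
    ‖f i‖ ≤ lpNorm p f := by
  by_cases h : p = ∞
  · subst h; rw [lpNorm_top]; exact le_ciSup (f := fun i => ‖f i‖) (Set.Finite.bddAbove (Set.finite_range _)) i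
  · have hpt : 0 < p.toReal := toReal_pos_of_one_le hp h
    rw [lpNorm_ne_top h]
    calc ‖f i‖ = (‖f i‖ ^ p.toReal) ^ (1 / p.toReal) := by
          rw [one_div, Real.rpow_rpow_inv (norm_nonneg _) hpt.ne']
      _ ≤ _ := by
          refine Real.rpow_le_rpow (Real.rpow_nonneg (norm_nonneg _) _) ?_ (by positivity)
          exact Finset.single_le_sum (fun i _ => Real.rpow_nonneg (norm_nonneg _) _)
            (Finset.mem_univ i)

lemma lpNorm_le_of_le_mul [Nonempty ι] {p : ℝ≥0∞} (hp : 1 ≤ p) {f : ι → E} {g : ι → F}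
    {c : ℝ} (hc : 0 ≤ c) (h : ∀ i, ‖f i‖ ≤ c * ‖g i‖) : lpNorm p f ≤ c * lpNorm p g := by
  by_cases htop : p = ∞
  · subst htop; rw [lpNorm_top, lpNorm_top]
    refine ciSup_le fun i => (h i).trans ?_
    exact mul_le_mul_of_nonneg_left (le_ciSup (f := fun i => ‖g i‖) (Set.Finite.bddAbove (Set.finite_range _)) i) hc
  · have hpt : 0 < p.toReal := toReal_pos_of_one_le hp htop
    rw [lpNorm_ne_top htop, lpNorm_ne_top htop]
    have hsum : ∑ i, ‖f i‖ ^ p.toReal ≤ c ^ p.toReal * ∑ i, ‖g i‖ ^ p.toReal := by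
      rw [Finset.mul_sum]
      refine Finset.sum_le_sum fun i _ => ?_
      rw [← Real.mul_rpow hc (norm_nonneg _)]
      exact Real.rpow_le_rpow (norm_nonneg _) (h i) hpt.le
    calc (∑ i, ‖f i‖ ^ p.toReal) ^ (1 / p.toReal)
        ≤ (c ^ p.toReal * ∑ i, ‖g i‖ ^ p.toReal) ^ (1 / p.toReal) :=
          Real.rpow_le_rpow (Finset.sum_nonneg fun i _ => Real.rpow_nonneg (norm_nonneg _) _)
            hsum (by positivity)
      _ = _ := by
          rw [Real.mul_rpow (Real.rpow_nonneg hc _)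
            (Finset.sum_nonneg fun i _ => Real.rpow_nonneg (norm_nonneg _) _),
            one_div, Real.rpow_rpow_inv hc hpt.ne']

end aux

section holder
variable {ι : Type*} [Fintype ι] [Nonempty ι]

lemma lpNorm_one (f : ι → ℂ) : lpNorm 1 f = ∑ v, ‖f v‖ := by
  rw [lpNorm_ne_top (by simp)]
  simp

lemma holder_sum {p q : ℝ≥0∞} (hp : 1 ≤ p) (hq : 1 ≤ q)
    (hpq : 1 / p + 1 / q = 1) (f g : ι → ℂ) :
    ‖∑ v, f v * g v‖ ≤ lpNorm q f * lpNorm p g := by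
  have hnn : ‖∑ v, f v * g v‖ ≤ ∑ v, ‖f v‖ * ‖g v‖ := by
    refine (norm_sum_le _ _).trans ?_
    exact Finset.sum_le_sum fun v _ => le_of_eq (norm_mul _ _)
  refine hnn.trans ?_
  by_cases hp1 : p = 1
  · have hqtop : q = ∞ := by
      subst hp1
      have h0 : 1 / q = 0 := by
        have h1 : (1 : ℝ≥0∞) + 1 / q = 1 + 0 := by simpa using hpq
        exact (ENNReal.add_right_inj (by simp)).mp h1
      rcases ENNReal.div_eq_zero_iff.mp h0 with h | h
      · simp at h
      · exact h
    subst hp1 hqtop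
    rw [lpNorm_one, lpNorm_top, Finset.mul_sum]
    refine Finset.sum_le_sum fun v _ => ?_
    exact mul_le_mul_of_nonneg_right
      (le_ciSup (f := fun v => ‖f v‖) (Set.Finite.bddAbove (Set.finite_range _)) v)
      (norm_nonneg _)
  by_cases hptop : p = ∞
  · have hq1 : q = 1 := by
      subst hptop
      simp only [one_div, ENNReal.inv_top, zero_add] at hpq
      exact ENNReal.inv_eq_one.mp hpq
    subst hptop hq1
    rw [lpNorm_one, lpNorm_top, Finset.sum_mul]
    refine Finset.sum_le_sum fun v _ => ?_
    exact mul_le_mul_of_nonneg_left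
      (le_ciSup (f := fun v => ‖g v‖) (Set.Finite.bddAbove (Set.finite_range _)) v)
      (norm_nonneg _)
  · -- 1 < p < ∞
    have hqtop : q ≠ ∞ := by
      intro h
      subst h
      simp only [one_div, ENNReal.inv_top, add_zero, ENNReal.inv_eq_one] at hpq
      exact hp1 hpq
    have hp0 : p ≠ 0 := by intro h; simp [h] at hp
    have hq0 : q ≠ 0 := by intro h; simp [h] at hq
    have hfp : 1 / p ≠ ∞ := by simp [one_div, ENNReal.inv_ne_top, hp0]
    have hfq : 1 / q ≠ ∞ := by simp [one_div, ENNReal.inv_ne_top, hq0]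
    have hsum : p.toReal⁻¹ + q.toReal⁻¹ = 1 := by
      have := congrArg ENNReal.toReal hpq
      rw [ENNReal.toReal_add hfp hfq] at this
      simpa [one_div, ENNReal.toReal_inv] using this
    have hplt : 1 < p.toReal := by
      have := ENNReal.toReal_strict_mono hptop (lt_of_le_of_ne hp (Ne.symm hp1))
      simpa using this
    have conj : Real.HolderConjugate p.toReal q.toReal := Real.holderConjugate_iff.mpr ⟨hplt, hsum⟩
    rw [lpNorm_ne_top hqtop, lpNorm_ne_top hptop]
    have := Real.inner_le_Lp_mul_Lq_of_nonneg (f := fun v => ‖f v‖) (g := fun v => ‖g v‖)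
      Finset.univ conj.symm (fun i _ => norm_nonneg _) (fun i _ => norm_nonneg _)
    exact this

end holder

variable {V R S : Type*} [Fintype V] [DecidableEq V] [Fintype R] [Fintype S]

/-- The multilinear forward Born operator: `bornK α0 B G C j` is `K_j`, mapping
`(η_1, …, η_j)` (given as the first `j` values of an `ℕ`-indexed family) to
`(r, s) ↦ (−α0)^j (B D_{η_1} G D_{η_2} G ⋯ G D_{η_j} C)(r, s)`; `K_0 := 0` is junk. -/
noncomputable def bornK (α0 : ℝ) (B : Matrix R V ℂ) (G : Matrix V V ℂ) (C : Matrix V S ℂ) :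
    ℕ → (ℕ → V → ℂ) → R × S → ℂ
  | 0, _ => 0
  | j + 1, η => fun rs =>
      (-(α0 : ℂ)) ^ (j + 1) *
        (B * Matrix.diagonal (η 0) *
          (List.ofFn fun i : Fin j => G * Matrix.diagonal (η (i.1 + 1))).prod * C) rs.1 rs.2

/-- `μ_p = α0 · max_{v ∈ V} ‖row v of G‖_{ℓ^q}` (this depends only on `q`). -/
noncomputable def muConst (α0 : ℝ) (q : ℝ≥0∞) (G : Matrix V V ℂ) : ℝ :=
  α0 * ⨆ v : V, lpNorm q (G v)

/-- `ν_p = α0 · (Σ_{r ∈ R} ‖row r of B‖_q^p)^{1/p} · (Σ_{s ∈ S} ‖column s of C‖_q^p)^{1/p}`,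
with maxima replacing sums when `p = ∞`. -/
noncomputable def nuConst (α0 : ℝ) (p q : ℝ≥0∞) (B : Matrix R V ℂ) (C : Matrix V S ℂ) : ℝ :=
  α0 * lpNorm p (fun r : R => lpNorm q (B r)) * lpNorm p (fun s : S => lpNorm q fun v => C v s)

/-- `C_p = min_{‖η‖_p = 1} ‖K_1 η‖_p`. -/
noncomputable def CpConst (p : ℝ≥0∞) (α0 : ℝ) (B : Matrix R V ℂ) (G : Matrix V V ℂ)
    (C : Matrix V S ℂ) : ℝ :=
  sInf {t : ℝ | ∃ η : V → ℂ, lpNorm p η = 1 ∧ t = lpNorm p (bornK α0 B G C 1 fun _ => η)}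

section chain

lemma chain_bound {V S : Type*} [Fintype V] [DecidableEq V] [Fintype S] [Nonempty V] (p q : ℝ≥0∞) (hp : 1 ≤ p) (hq : 1 ≤ q) (hpq : 1 / p + 1 / q = 1)
    (G : Matrix V V ℂ) (C : Matrix V S ℂ) (η : ℕ → V → ℂ) (s : S) (j : ℕ) : ∀ k : ℕ,
    lpNorm p (fun v =>
        (Matrix.diagonal (η k) *
          (List.ofFn fun i : Fin j => G * Matrix.diagonal (η (k + 1 + i.1))).prod * C) v s) ≤
      lpNorm q (fun v => C v s) * (⨆ v, lpNorm q (G v)) ^ j *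
        ∏ i ∈ Finset.range (j + 1), lpNorm p (η (k + i)) := by
  induction j with
  | zero =>
    intro k
    simp only [List.ofFn_zero, List.prod_nil, mul_one, pow_zero, zero_add,
      Finset.prod_range_one, Nat.add_zero]
    refine lpNorm_le_of_le_mul hp (lpNorm_nonneg q (fun v => C v s)) fun v => ?_
    rw [Matrix.diagonal_mul, norm_mul, mul_comm]
    exact mul_le_mul_of_nonneg_right (norm_le_lpNorm hq (fun v => C v s) v) (norm_nonneg _)
  | succ j ih =>
    intro k
    have hfun : (List.ofFn fun i : Fin (j + 1) => G * Matrix.diagonal (η (k + 1 + i.1))) =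
        (G * Matrix.diagonal (η (k + 1))) ::
          (List.ofFn fun i : Fin j => G * Matrix.diagonal (η ((k + 1) + 1 + i.1))) := by
      rw [List.ofFn_succ]
      refine congrArg₂ List.cons (by simp) (congrArg List.ofFn (funext fun i => ?_))
      have hidx : k + 1 + ((i.succ : Fin (j + 1))).1 = (k + 1) + 1 + i.1 := by
        rw [Fin.val_succ]; omega
      rw [hidx]
    obtain ⟨μ', hμ'⟩ : ∃ x : ℝ, x = ⨆ v, lpNorm q (G v) := ⟨_, rfl⟩
    rw [← hμ'] at ih ⊢
    have hμ0 : 0 ≤ μ' := hμ'.symm ▸ (Real.iSup_nonneg fun v => lpNorm_nonneg _ _)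
    set Q : Matrix V S ℂ := Matrix.diagonal (η (k + 1)) *
        (List.ofFn fun i : Fin j => G * Matrix.diagonal (η ((k + 1) + 1 + i.1))).prod * C with hQ
    have hM : Matrix.diagonal (η k) *
        (List.ofFn fun i : Fin (j + 1) => G * Matrix.diagonal (η (k + 1 + i.1))).prod * C
        = Matrix.diagonal (η k) * (G * Q) := by
      rw [hfun, List.prod_cons, hQ]
      simp only [Matrix.mul_assoc]
    have hmat : ∀ v, (Matrix.diagonal (η k) *
        (List.ofFn fun i : Fin (j + 1) => G * Matrix.diagonal (η (k + 1 + i.1))).prod * C) v s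
        = η k v * (G * Q) v s := by
      intro v
      rw [hM, Matrix.diagonal_mul]
    obtain ⟨Bj, hBj⟩ : ∃ x : ℝ, x = lpNorm q (fun v => C v s) * μ' ^ j *
        ∏ i ∈ Finset.range (j + 1), lpNorm p (η ((k + 1) + i)) := ⟨_, rfl⟩
    have hBj0 : 0 ≤ Bj := by
      rw [hBj]
      refine mul_nonneg (mul_nonneg (lpNorm_nonneg _ _) (pow_nonneg hμ0 _)) ?_
      exact Finset.prod_nonneg fun i _ => lpNorm_nonneg _ _
    have hGQ : ∀ v, ‖(G * Q) v s‖ ≤ μ' * Bj := by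
      intro v
      rw [Matrix.mul_apply, hBj]
      refine (holder_sum hp hq hpq (G v) (fun w => Q w s)).trans ?_
      refine mul_le_mul ?_ (ih (k + 1)) (lpNorm_nonneg _ _) hμ0
      rw [hμ']
      exact le_ciSup (f := fun v => lpNorm q (G v))
        (Set.Finite.bddAbove (Set.finite_range _)) v
    have step : lpNorm p (fun v =>
        (Matrix.diagonal (η k) *
          (List.ofFn fun i : Fin (j + 1) => G * Matrix.diagonal (η (k + 1 + i.1))).prod * C) v s)
        ≤ (μ' * Bj) * lpNorm p (η k) := by
      refine lpNorm_le_of_le_mul hp (mul_nonneg hμ0 hBj0) fun v => ?_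
      rw [hmat v, norm_mul, mul_comm]
      exact mul_le_mul_of_nonneg_right (hGQ v) (norm_nonneg _)
    refine step.trans (le_of_eq ?_)
    rw [Finset.prod_range_succ' (fun i => lpNorm p (η (k + i))) (j + 1)]
    have hpr : ∏ i ∈ Finset.range (j + 1), lpNorm p (η (k + (i + 1))) =
        ∏ i ∈ Finset.range (j + 1), lpNorm p (η ((k + 1) + i)) :=
      Finset.prod_congr rfl fun i _ => by rw [show k + (i + 1) = (k + 1) + i from by omega]
    rw [hpr, Nat.add_zero, hBj]
    have key : ∀ a b c d : ℝ, a * (b * a ^ j * c) * d = b * a ^ (j + 1) * (c * d) := by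
      intros; ring
    exact key μ' _ _ _

end chain

section prodlem

lemma lpNorm_prod_le {R S : Type*} [Fintype R] [Fintype S] [Nonempty R] [Nonempty S] {p : ℝ≥0∞} (hp : 1 ≤ p) (f : R × S → ℂ) (u : R → ℝ) (w : S → ℝ)
    (hu : ∀ r, 0 ≤ u r) (hw : ∀ s, 0 ≤ w s) {c : ℝ} (hc : 0 ≤ c)
    (h : ∀ r s, ‖f (r, s)‖ ≤ c * (u r * w s)) :
    lpNorm p f ≤ c * (lpNorm p u * lpNorm p w) := by
  by_cases htop : p = ∞
  · subst htop
    rw [lpNorm_top, lpNorm_top, lpNorm_top]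
    refine ciSup_le fun rs => ?_
    have h1 : u rs.1 ≤ ⨆ r, ‖u r‖ :=
      (Real.le_norm_self _).trans
        (le_ciSup (f := fun r => ‖u r‖) (Set.Finite.bddAbove (Set.finite_range _)) rs.1)
    have h2 : w rs.2 ≤ ⨆ s, ‖w s‖ :=
      (Real.le_norm_self _).trans
        (le_ciSup (f := fun s => ‖w s‖) (Set.Finite.bddAbove (Set.finite_range _)) rs.2)
    refine (h rs.1 rs.2).trans (mul_le_mul_of_nonneg_left ?_ hc)
    exact mul_le_mul h1 h2 (hw _) (Real.iSup_nonneg fun r => norm_nonneg _)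
  · have hpt : 0 < p.toReal := toReal_pos_of_one_le hp htop
    rw [lpNorm_ne_top htop, lpNorm_ne_top htop, lpNorm_ne_top htop]
    have hsum : ∑ rs : R × S, ‖f rs‖ ^ p.toReal ≤
        c ^ p.toReal * ((∑ r, ‖u r‖ ^ p.toReal) * (∑ s, ‖w s‖ ^ p.toReal)) := by
      calc ∑ rs : R × S, ‖f rs‖ ^ p.toReal
          ≤ ∑ rs : R × S, (c ^ p.toReal * ‖u rs.1‖ ^ p.toReal) * ‖w rs.2‖ ^ p.toReal := by
            refine Finset.sum_le_sum fun rs _ => ?_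
            have := Real.rpow_le_rpow (norm_nonneg _) (h rs.1 rs.2) hpt.le
            refine this.trans (le_of_eq ?_)
            rw [Real.mul_rpow hc (mul_nonneg (hu _) (hw _)),
              Real.mul_rpow (hu _) (hw _), Real.norm_of_nonneg (hu _),
              Real.norm_of_nonneg (hw _), mul_assoc]
        _ = c ^ p.toReal * ((∑ r, ‖u r‖ ^ p.toReal) * (∑ s, ‖w s‖ ^ p.toReal)) := by
            rw [Fintype.sum_prod_type]
            simp only [← Finset.sum_mul, ← Finset.mul_sum]
            ring
    calc (∑ rs : R × S, ‖f rs‖ ^ p.toReal) ^ (1 / p.toReal)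
        ≤ (c ^ p.toReal * ((∑ r, ‖u r‖ ^ p.toReal) * (∑ s, ‖w s‖ ^ p.toReal))) ^ (1 / p.toReal) :=
          Real.rpow_le_rpow (Finset.sum_nonneg fun rs _ => Real.rpow_nonneg (norm_nonneg _) _)
            hsum (by positivity)
      _ = _ := by
          have hA : (0:ℝ) ≤ ∑ r, ‖u r‖ ^ p.toReal :=
            Finset.sum_nonneg fun r _ => Real.rpow_nonneg (norm_nonneg _) _
          have hB : (0:ℝ) ≤ ∑ s, ‖w s‖ ^ p.toReal :=
            Finset.sum_nonneg fun s _ => Real.rpow_nonneg (norm_nonneg _) _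
          rw [Real.mul_rpow (Real.rpow_nonneg hc _) (mul_nonneg hA hB),
            Real.mul_rpow hA hB, one_div, Real.rpow_rpow_inv hc hpt.ne']

end prodlem

/- STATEMENT 2: For every `j ≥ 1` (here written `j + 1` with `j : ℕ`) and all
`η_1, …, η_j ∈ ℂ^V`, `‖K_j(η_1, …, η_j)‖_{ℓ^p(R×S)} ≤ ν_p μ_p^{j−1} ‖η_1‖_p ⋯ ‖η_j‖_p`. -/
theorem forward_born_bound [Nonempty V] [Nonempty R] [Nonempty S]
    (p q : ℝ≥0∞) (hp : 1 ≤ p) (hq : 1 ≤ q) (hpq : 1 / p + 1 / q = 1)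
    (α0 : ℝ) (hα0 : 0 < α0) (B : Matrix R V ℂ) (G : Matrix V V ℂ) (C : Matrix V S ℂ)
    (j : ℕ) (η : ℕ → V → ℂ) :
    lpNorm p (fun rs : R × S => bornK α0 B G C (j + 1) η rs) ≤
      nuConst α0 p q B C * muConst α0 q G ^ j *
        ∏ i ∈ Finset.range (j + 1), lpNorm p (η i) := by
  obtain ⟨μ', hμ'⟩ : ∃ x : ℝ, x = ⨆ v, lpNorm q (G v) := ⟨_, rfl⟩
  have hμ0 : 0 ≤ μ' := hμ'.symm ▸ Real.iSup_nonneg fun v => lpNorm_nonneg _ _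
  have hprod0 : 0 ≤ ∏ i ∈ Finset.range (j + 1), lpNorm p (η i) :=
    Finset.prod_nonneg fun i _ => lpNorm_nonneg _ _
  have hidx : (List.ofFn fun i : Fin j => G * Matrix.diagonal (η (i.1 + 1))) =
      (List.ofFn fun i : Fin j => G * Matrix.diagonal (η (0 + 1 + i.1))) := by
    refine congrArg List.ofFn (funext fun i => ?_)
    rw [show i.1 + 1 = 0 + 1 + i.1 from by omega]
  have hkey : ∀ rs : R × S, ‖bornK α0 B G C (j + 1) η rs‖ ≤
      (α0 ^ (j + 1) * (μ' ^ j * ∏ i ∈ Finset.range (j + 1), lpNorm p (η i))) *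
        (lpNorm q (B rs.1) * lpNorm q (fun v => C v rs.2)) := by
    intro rs
    show ‖(-(α0 : ℂ)) ^ (j + 1) * (B * Matrix.diagonal (η 0) *
        (List.ofFn fun i : Fin j => G * Matrix.diagonal (η (i.1 + 1))).prod * C) rs.1 rs.2‖ ≤ _
    rw [norm_mul, norm_pow, norm_neg, Complex.norm_real, Real.norm_of_nonneg hα0.le]
    have hmat : (B * Matrix.diagonal (η 0) *
        (List.ofFn fun i : Fin j => G * Matrix.diagonal (η (i.1 + 1))).prod * C) rs.1 rs.2 =
        ∑ v, B rs.1 v * (Matrix.diagonal (η 0) *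
          (List.ofFn fun i : Fin j => G * Matrix.diagonal (η (i.1 + 1))).prod * C) v rs.2 := by
      rw [show B * Matrix.diagonal (η 0) *
          (List.ofFn fun i : Fin j => G * Matrix.diagonal (η (i.1 + 1))).prod * C =
          B * (Matrix.diagonal (η 0) *
            (List.ofFn fun i : Fin j => G * Matrix.diagonal (η (i.1 + 1))).prod * C) from by
        simp only [Matrix.mul_assoc], Matrix.mul_apply]
    have hchain : lpNorm p (fun v => (Matrix.diagonal (η 0) *
        (List.ofFn fun i : Fin j => G * Matrix.diagonal (η (i.1 + 1))).prod * C) v rs.2) ≤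
        lpNorm q (fun v => C v rs.2) * μ' ^ j * ∏ i ∈ Finset.range (j + 1), lpNorm p (η i) := by
      rw [hidx, hμ']
      refine (chain_bound p q hp hq hpq G C η rs.2 j 0).trans (le_of_eq ?_)
      congr 1
      exact Finset.prod_congr rfl fun i _ => by rw [zero_add]
    have h1 : ‖(B * Matrix.diagonal (η 0) *
        (List.ofFn fun i : Fin j => G * Matrix.diagonal (η (i.1 + 1))).prod * C) rs.1 rs.2‖ ≤
        lpNorm q (B rs.1) *
          (lpNorm q (fun v => C v rs.2) * μ' ^ j * ∏ i ∈ Finset.range (j + 1), lpNorm p (η i)) := by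
      rw [hmat]
      refine (holder_sum hp hq hpq (B rs.1) _).trans ?_
      exact mul_le_mul_of_nonneg_left hchain (lpNorm_nonneg _ _)
    refine (mul_le_mul_of_nonneg_left h1 (pow_nonneg hα0.le _)).trans (le_of_eq ?_)
    ring
  have hc0 : 0 ≤ α0 ^ (j + 1) * (μ' ^ j * ∏ i ∈ Finset.range (j + 1), lpNorm p (η i)) :=
    mul_nonneg (pow_nonneg hα0.le _) (mul_nonneg (pow_nonneg hμ0 _) hprod0)
  have main := lpNorm_prod_le hp (fun rs : R × S => bornK α0 B G C (j + 1) η rs)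
      (fun r => lpNorm q (B r)) (fun s => lpNorm q (fun v => C v s))
      (fun r => lpNorm_nonneg _ _) (fun s => lpNorm_nonneg _ _) hc0
      (fun r s => hkey (r, s))
  refine main.trans (le_of_eq ?_)
  simp only [nuConst, muConst, ← hμ']
  ring
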